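/- arXiv:1707.09151 — 2 statements merged into one kernel-verified Lean document; each statement's English description precedes it below -/
import Mathlib

section
/- For all natural numbers k ≥ 1, α, and n ≥ 1, the Fibonacci subsequence satisfies F_{k(n+1)+α} = L_k·F_{kn+α} + (−1)^{k−1}·F_{k(n−1)+α}, where L_k is the k-th Lucas number. -/
private lemma ocagne (k : ℕ) : ∀ j : ℕ,
    (Nat.fib (j + k + 1) : ℤ) * Nat.fib k - Nat.fib (k + 1) * Nat.fib (j + k) =
      (-1) ^ (k + 1) * Nat.fib j := by
  induction k with
  | zero => intro j; simp
  | succ k ih =>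
    intro j
    have h1 := ih j
    have e1 : j + (k + 1) + 1 = (j + k) + 2 := by ring
    have e2 : j + (k + 1) = (j + k) + 1 := by ring
    rw [e1, e2, Nat.fib_add_two, Nat.fib_add_two]
    push_cast
    push_cast at h1
    ring_nf
    ring_nf at h1
    linarith

private lemma lucas_eq (L : ℕ → ℤ) (hL1 : L 1 = 1)
    (hLrec : ∀ n : ℕ, L (n + 2) = L (n + 1) + L n) (hL0 : L 0 = 2) :
    ∀ k : ℕ, L (k + 1) = Nat.fib (k + 2) + Nat.fib k := by
  have key : ∀ k : ℕ, L (k + 1) = Nat.fib (k + 2) + Nat.fib k ∧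
      L (k + 2) = Nat.fib (k + 3) + Nat.fib (k + 1) := by
    intro k
    induction k with
    | zero => refine ⟨by simp [hL1], ?_⟩
              rw [hLrec 0, hL1, hL0]; norm_num
    | succ k ih =>
      obtain ⟨h1, h2⟩ := ih
      refine ⟨h2, ?_⟩
      rw [hLrec (k + 1), h1, h2]
      show _ = (Nat.fib (k + 4) : ℤ) + Nat.fib (k + 2)
      have f4 : (Nat.fib (k + 4) : ℤ) = Nat.fib (k + 2) + Nat.fib (k + 3) := by
        rw [show k + 4 = (k + 2) + 2 from rfl, Nat.fib_add_two]; push_cast; ring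
      have f3 : (Nat.fib (k + 3) : ℤ) = Nat.fib (k + 1) + Nat.fib (k + 2) := by
        rw [show k + 3 = (k + 1) + 2 from rfl, Nat.fib_add_two]; push_cast; ring
      have f2 : (Nat.fib (k + 2) : ℤ) = Nat.fib k + Nat.fib (k + 1) := by
        rw [Nat.fib_add_two]; push_cast; ring
      linarith
  exact fun k => (key k).1

theorem equi_fib_recursion (L : ℕ → ℤ)
    (hL0 : L 0 = 2) (hL1 : L 1 = 1)
    (hLrec : ∀ n : ℕ, L (n + 2) = L (n + 1) + L n)
    (k α n : ℕ) (hk : 1 ≤ k) (hn : 1 ≤ n) :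
    (Nat.fib (k * (n + 1) + α) : ℤ) =
      L k * Nat.fib (k * n + α) + (-1) ^ (k - 1) * Nat.fib (k * (n - 1) + α) := by
  obtain ⟨m, rfl⟩ := Nat.exists_eq_add_of_le hk
  obtain ⟨p, rfl⟩ := Nat.exists_eq_add_of_le hn
  set j := (1 + m) * p + α with hj
  have e0 : (1 + m) * (1 + p - 1) + α = j := by simp [hj]
  have e1 : (1 + m) * (1 + p) + α = j + (m + 1) := by rw [hj]; ring
  have e2 : (1 + m) * (1 + p + 1) + α = (j + (m + 1)) + m + 1 := by rw [hj]; ring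
  have e3 : 1 + m - 1 = m := by omega
  rw [e0, e1, e2, e3, show 1 + m = m + 1 from by ring,
    lucas_eq L hL1 hLrec hL0 m]
  have hadd : Nat.fib ((j + (m + 1)) + m + 1)
      = Nat.fib (j + (m + 1)) * Nat.fib m + Nat.fib (j + (m + 1) + 1) * Nat.fib (m + 1) :=
    Nat.fib_add _ _
  have hoc := ocagne (m + 1) j
  have hfib2 : (Nat.fib (m + 2) : ℤ) = Nat.fib m + Nat.fib (m + 1) := by
    rw [Nat.fib_add_two]; push_cast; ring
  have hp : ((-1 : ℤ)) ^ (m + 1 + 1) = (-1) ^ m := by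
    rw [pow_succ, pow_succ]; ring
  rw [hadd]
  push_cast
  push_cast at hoc
  rw [hp] at hoc
  nlinarith [hoc, hfib2]
end

section
/- For all natural numbers k ≥ 1, α, and n ≥ 1: F_{kn+α} = F_{α+k}·H_n + (−1)^{k+1}·F_α·H_{n−1}, where H_n = F_{nk}/F_k is the higher-order Fibonacci sequence. -/
lemma fib_aux1 (k a : ℕ) :
    (Nat.fib k : ℤ) * Nat.fib (a + k + 1) - Nat.fib (k + 1) * Nat.fib (a + k)
      = (-1) ^ (k + 1) * Nat.fib a := by
  induction k with
  | zero => simp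
  | succ k ih =>
    have h1 : a + (k + 1) + 1 = (a + k) + 2 := by ring
    have h2 : a + (k + 1) = (a + k) + 1 := by ring
    rw [h1, h2, Nat.fib_add_two, Nat.fib_add_two (n := k)]
    push_cast
    have : ((-1 : ℤ)) ^ (k + 1 + 1) = -((-1) ^ (k + 1)) := by ring
    rw [this]
    linarith [ih]

lemma fib_aux2 (α k a : ℕ) :
    (Nat.fib k : ℤ) * Nat.fib (a + k + α)
      = Nat.fib (α + k) * Nat.fib (a + k) + (-1) ^ (k + 1) * Nat.fib α * Nat.fib a := by
  induction α using Nat.strong_induction_on with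
  | _ α ih =>
    match α with
    | 0 => simp
    | 1 =>
      have := fib_aux1 k a
      have h5 : 1 + k = k + 1 := by ring
      rw [h5]
      simp only [Nat.fib_one, Nat.cast_one]
      linarith [this]
    | m + 2 =>
      have h1 : a + k + (m + 2) = (a + k + m) + 2 := by ring
      have h2 : m + 2 + k = (m + k) + 2 := by ring
      rw [h1, h2, Nat.fib_add_two, Nat.fib_add_two, Nat.fib_add_two (n := m)]
      push_cast
      have e1 := ih m (by omega)
      have e2 := ih (m + 1) (by omega)
      have h3 : a + k + (m + 1) = a + k + m + 1 := by ring
      have h4 : m + 1 + k = m + k + 1 := by ring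
      rw [h3, h4] at e2
      linarith [e1, e2]

theorem equi_fib_superposition (k : ℕ) (hk : 1 ≤ k)
    (H : ℕ → ℕ) (hH : ∀ m : ℕ, H m * Nat.fib k = Nat.fib (m * k))
    (α n : ℕ) (hn : 1 ≤ n) :
    (Nat.fib (k * n + α) : ℤ) =
      Nat.fib (α + k) * H n + (-1) ^ (k + 1) * Nat.fib α * H (n - 1) := by
  obtain ⟨m, rfl⟩ : ∃ m, n = m + 1 := ⟨n - 1, by omega⟩
  have hfk : (Nat.fib k : ℤ) ≠ 0 := by
    exact_mod_cast (Nat.fib_pos.mpr hk).ne'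
  apply mul_left_cancel₀ hfk
  have key := fib_aux2 α k (k * m)
  have hn1 := hH (m + 1)
  have hm := hH m
  have e1 : (m + 1) * k = k * m + k := by ring
  have e2 : m * k = k * m := by ring
  rw [e1] at hn1
  rw [e2] at hm
  have hn1' : (H (m + 1) : ℤ) * Nat.fib k = Nat.fib (k * m + k) := by exact_mod_cast hn1
  have hm' : (H m : ℤ) * Nat.fib k = Nat.fib (k * m) := by exact_mod_cast hm
  have harg : k * (m + 1) + α = k * m + k + α := by ring
  rw [harg]
  simp only [Nat.add_sub_cancel]
  calc (Nat.fib k : ℤ) * Nat.fib (k * m + k + α)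
      = Nat.fib (α + k) * Nat.fib (k * m + k) + (-1) ^ (k + 1) * Nat.fib α * Nat.fib (k * m) := key
    _ = Nat.fib (α + k) * ((H (m+1) : ℤ) * Nat.fib k) + (-1) ^ (k + 1) * Nat.fib α * ((H m : ℤ) * Nat.fib k) := by rw [hn1', hm']
    _ = (Nat.fib k : ℤ) * ((Nat.fib (α + k) : ℤ) * H (m+1) + (-1) ^ (k + 1) * Nat.fib α * H m) := by ring
end
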